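/- Let S be a finite nonempty set, G : S × S → ℝ a grammar taking values in {0,1}, and ψ, φ : S → ℝ. For t ∈ ℝ let L(t) be the matrix with entries L(t)_{w',w} = e^{ψ(w') + t·φ(w')}·G(w',w). Suppose s : ℝ → ℝ and r : ℝ → (S → ℝ) are differentiable at 0, s(0) > 0, L(t)·r(t) = s(t)·r(t) for all t in a neighborhood of 0, and l : S → ℝ satisfies lᵀ·L(0) = s(0)·lᵀ with Σ_w l_w·r(0)_w = 1. Then the derivative of t ↦ log s(t) at t = 0 equals Σ_w φ(w)·l_w·r(0)_w. -/

import Mathlib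

/-- **The topological pressure is a generating function:**
`∂/∂t log s(t) |_{t=0} = μ_ψ(φ) = ∑_w φ w * l w * r 0 w`, where `s t` is the
leading eigenvalue of the RPF matrix of the perturbed potential `ψ + t·φ`. -/
theorem pressure_derivative_is_gibbs_average
    {S : Type*} [Fintype S] [Nonempty S] [DecidableEq S]
    (G : S → S → ℝ) (hG : ∀ w' w, G w' w = 0 ∨ G w' w = 1)
    (ψ φ : S → ℝ)
    (L : ℝ → Matrix S S ℝ)
    (hLdef : ∀ t w' w, L t w' w = Real.exp (ψ w' + t * φ w') * G w' w)
    (s : ℝ → ℝ) (r : ℝ → S → ℝ)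
    (hs : DifferentiableAt ℝ s 0) (hr : DifferentiableAt ℝ r 0)
    (hs0 : 0 < s 0)
    (heig : ∀ᶠ t in nhds (0 : ℝ), (L t).mulVec (r t) = s t • r t)
    (l : S → ℝ) (hleft : Matrix.vecMul l (L 0) = s 0 • l)
    (hnorm : ∑ w, l w * r 0 w = 1) :
    deriv (fun t => Real.log (s t)) 0 = ∑ w, φ w * (l w * r 0 w) := by
  set r' := deriv r 0 with hr'def
  set s' := deriv s 0 with hs'def
  have heig0 : (L 0).mulVec (r 0) = s 0 • r 0 := heig.self_of_nhds
  have hL : ∀ t w' w, L t w' w = Real.exp (t * φ w') * L 0 w' w := by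
    intro t w' w
    rw [hLdef, hLdef, ← mul_assoc, ← Real.exp_add]
    ring_nf
  -- component derivatives of r
  have hrc : ∀ w, HasDerivAt (fun t => r t w) (r' w) 0 :=
    fun w => (hasDerivAt_pi.mp hr.hasDerivAt) w
  have hB : ∀ w', HasDerivAt (fun t => ∑ w, L 0 w' w * r t w)
      (∑ w, L 0 w' w * r' w) 0 :=
    fun w' => HasDerivAt.fun_sum (fun w _ => (hrc w).const_mul _)
  have hA : ∀ w', HasDerivAt (fun t : ℝ => Real.exp (t * φ w')) (φ w') 0 := by
    intro w'
    have := ((hasDerivAt_id (0:ℝ)).mul_const (φ w')).exp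
    simpa using this
  -- derivative of the paired quantity, first form
  have hH : HasDerivAt
      (fun t => ∑ w', l w' * (Real.exp (t * φ w') * ∑ w, L 0 w' w * r t w))
      (∑ w', l w' * (φ w' * (∑ w, L 0 w' w * r 0 w)
        + Real.exp ((0:ℝ) * φ w') * (∑ w, L 0 w' w * r' w))) 0 := by
    apply HasDerivAt.fun_sum
    intro w' _
    exact ((hA w').mul (hB w')).const_mul (l w')
  -- the paired quantity agrees with s t * ⟨l, r t⟩ near 0
  have hEq : (fun t => s t * ∑ w, l w * r t w)
      =ᶠ[nhds (0:ℝ)]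
      (fun t => ∑ w', l w' * (Real.exp (t * φ w') * ∑ w, L 0 w' w * r t w)) := by
    filter_upwards [heig] with t ht
    have key : ∀ w', Real.exp (t * φ w') * ∑ w, L 0 w' w * r t w
        = s t * r t w' := by
      intro w'
      have h1 : (L t).mulVec (r t) w' = s t * r t w' := by
        rw [ht]; rfl
      rw [← h1]
      simp only [Matrix.mulVec, dotProduct, Finset.mul_sum]
      refine Finset.sum_congr rfl fun w _ => ?_
      rw [hL t w' w]; ring
    simp only [key]
    rw [Finset.mul_sum]
    refine Finset.sum_congr rfl fun w _ => ?_
    ring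
  -- derivative of the second form
  have hH2 : HasDerivAt (fun t => s t * ∑ w, l w * r t w)
      (s' * (∑ w, l w * r 0 w) + s 0 * (∑ w, l w * r' w)) 0 :=
    hs.hasDerivAt.mul (HasDerivAt.fun_sum (fun w _ => (hrc w).const_mul _))
  have hH2' : HasDerivAt (fun t => s t * ∑ w, l w * r t w)
      (∑ w', l w' * (φ w' * (∑ w, L 0 w' w * r 0 w)
        + Real.exp ((0:ℝ) * φ w') * (∑ w, L 0 w' w * r' w))) 0 :=
    hH.congr_of_eventuallyEq hEq
  have hDeq := hH2.unique hH2'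
  -- simplify the derivative identity
  have e1 : ∀ w', (∑ w, L 0 w' w * r 0 w) = s 0 * r 0 w' := by
    intro w'
    have h1 : (L 0).mulVec (r 0) w' = s 0 * r 0 w' := by rw [heig0]; rfl
    rw [← h1]; rfl
  have e2 : (∑ w', l w' * ∑ w, L 0 w' w * r' w) = s 0 * ∑ w, l w * r' w := by
    simp only [Finset.mul_sum]
    rw [Finset.sum_comm]
    refine Finset.sum_congr rfl fun w _ => ?_
    have hv : Matrix.vecMul l (L 0) w = s 0 * l w := by rw [hleft]; rfl
    have hv' : (∑ w', l w' * L 0 w' w) = s 0 * l w := by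
      rw [← hv]; simp [Matrix.vecMul, dotProduct]
    calc ∑ w', l w' * (L 0 w' w * r' w)
        = (∑ w', l w' * L 0 w' w) * r' w := by
          rw [Finset.sum_mul]; exact Finset.sum_congr rfl fun w' _ => by ring
      _ = s 0 * (l w * r' w) := by rw [hv']; ring
  have key : s' = s 0 * ∑ w, φ w * (l w * r 0 w) := by
    have h3 : ∑ w', l w' * (φ w' * (∑ w, L 0 w' w * r 0 w)
        + Real.exp ((0:ℝ) * φ w') * (∑ w, L 0 w' w * r' w))
        = (s 0 * ∑ w, φ w * (l w * r 0 w)) + s 0 * ∑ w, l w * r' w := by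
      simp only [e1, zero_mul, Real.exp_zero, one_mul, mul_add,
        Finset.sum_add_distrib, e2]
      congr 1
      rw [Finset.mul_sum]
      exact Finset.sum_congr rfl fun w _ => by ring
    rw [h3, hnorm, mul_one] at hDeq
    linarith
  have hlog : HasDerivAt (fun t => Real.log (s t)) (s' / s 0) 0 :=
    hs.hasDerivAt.log hs0.ne'
  rw [hlog.deriv, key, mul_comm, mul_div_assoc, div_self hs0.ne', mul_one]
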